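/- Let (L_t)_{t ≥ 1} be independent, identically distributed, strictly positive (a.s.), integrable random variables with E[L_1] = 1. Define the CuSum statistic c_0 = 0, c_t = max(c_{t−1} + log L_t, 0), and for b > 0 let T = inf{ t ≥ 1 : c_t ≥ b } (with inf ∅ = ∞). Then E[T] ≥ e^{b}. -/

import Mathlib

open MeasureTheory ProbabilityTheory
open scoped ENNReal

noncomputable section

namespace QCDStmt

/-- The CuSum recursion driven by the log-likelihood ratios `log (L t)`:
`c 0 = 0`, `c (t+1) = max (c t + log (L t)) 0`
(here `L t` is the likelihood ratio of the `(t+1)`-st observation). -/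
def cusumLog {Ω : Type*} (L : ℕ → Ω → ℝ) : ℕ → Ω → ℝ
  | 0 => fun _ => 0
  | t + 1 => fun ω => max (cusumLog L t ω + Real.log (L t ω)) 0

/-- The CuSum stopping time `T = inf {t ≥ 1 : c t ≥ b}` (with `inf ∅ = ∞`). -/
def cusumHit {Ω : Type*} (L : ℕ → Ω → ℝ) (b : ℝ) (ω : Ω) : ℕ∞ :=
  sInf {s : ℕ∞ | ∃ t : ℕ, s = (t : ℕ∞) ∧ 1 ≤ t ∧ b ≤ cusumLog L t ω}

/-! ### Auxiliary definitions on sequence space -/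

/-- The CuSum statistic as a function on sequence space. -/
def seqC : ℕ → (ℕ → ℝ) → ℝ := cusumLog (fun i x => x i)

/-- The event that the CuSum statistic has reached level `b` by time `n`. -/
def seqB (b : ℝ) (n : ℕ) : Set (ℕ → ℝ) := {x | ∃ t, 1 ≤ t ∧ t ≤ n ∧ b ≤ seqC t x}

/-- The (unstopped) Shiryaev–Roberts statistic. -/
def seqR : ℕ → (ℕ → ℝ) → ℝ≥0∞
  | 0 => fun _ => 0
  | n + 1 => fun x => (seqR n x + 1) * ENNReal.ofReal (x n)

open Classical in
/-- The Shiryaev–Roberts statistic stopped at the CuSum hitting time. -/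
def seqS (b : ℝ) : ℕ → (ℕ → ℝ) → ℝ≥0∞
  | 0 => fun _ => 0
  | n + 1 => fun x =>
      if x ∈ seqB b n then seqS b n x else (seqS b n x + 1) * ENNReal.ofReal (x n)

/-- The integrand multiplying the fresh likelihood ratio in the stopped recursion. -/
def seqF (b : ℝ) (n : ℕ) : (ℕ → ℝ) → ℝ≥0∞ :=
  (seqB b n)ᶜ.indicator (fun x => seqS b n x + 1)

/-- Extension of a finitely supported vector to a full sequence. -/
def extFun (n : ℕ) (v : {i // i ∈ Finset.range n} → ℝ) : ℕ → ℝ :=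
  fun i => if h : i ∈ Finset.range n then v ⟨i, h⟩ else 0

lemma cusumLog_eq_seqC {Ω : Type*} (L : ℕ → Ω → ℝ) (ω : Ω) :
    ∀ t, cusumLog L t ω = seqC t (fun i => L i ω)
  | 0 => rfl
  | t + 1 => by
      show max (cusumLog L t ω + Real.log (L t ω)) 0
          = max (seqC t (fun i => L i ω) + Real.log (L t ω)) 0
      rw [cusumLog_eq_seqC L ω t]

lemma seqC_succ (t : ℕ) (x : ℕ → ℝ) :
    seqC (t + 1) x = max (seqC t x + Real.log (x t)) 0 := rfl

lemma seqC_congr : ∀ (t : ℕ) {x y : ℕ → ℝ}, (∀ i, i < t → x i = y i) → seqC t x = seqC t y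
  | 0, _, _, _ => rfl
  | t + 1, x, y, h => by
      rw [seqC_succ, seqC_succ, seqC_congr t (fun i hi => h i (hi.trans t.lt_succ_self)),
        h t t.lt_succ_self]

lemma seqB_congr {b : ℝ} {n : ℕ} {x y : ℕ → ℝ} (h : ∀ i, i < n → x i = y i) :
    x ∈ seqB b n ↔ y ∈ seqB b n := by
  constructor <;> rintro ⟨t, h1, h2, h3⟩ <;> refine ⟨t, h1, h2, ?_⟩
  · rwa [seqC_congr t (fun i hi => (h i (lt_of_lt_of_le hi h2)).symm)]
  · rwa [seqC_congr t (fun i hi => h i (lt_of_lt_of_le hi h2))]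

lemma seqS_congr (b : ℝ) : ∀ (n : ℕ) {x y : ℕ → ℝ}, (∀ i, i < n → x i = y i) →
    seqS b n x = seqS b n y
  | 0, _, _, _ => rfl
  | n + 1, x, y, h => by
      have h' : ∀ i, i < n → x i = y i := fun i hi => h i (hi.trans n.lt_succ_self)
      have hB := seqB_congr (b := b) (n := n) h'
      have hS := seqS_congr b n h'
      by_cases hx : x ∈ seqB b n
      · simp only [seqS, if_pos hx, if_pos (hB.1 hx), hS]
      · simp only [seqS, if_neg hx, if_neg (fun hy => hx (hB.2 hy)), hS,
          h n n.lt_succ_self]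

lemma seqF_congr {b : ℝ} {n : ℕ} {x y : ℕ → ℝ} (h : ∀ i, i < n → x i = y i) :
    seqF b n x = seqF b n y := by
  unfold seqF
  by_cases hx : x ∈ seqB b n
  · rw [Set.indicator_of_notMem (by simpa using hx),
      Set.indicator_of_notMem (by simpa using (seqB_congr h).1 hx)]
  · rw [Set.indicator_of_mem (by simpa using hx),
      Set.indicator_of_mem (by simpa using (fun hy => hx ((seqB_congr h).2 hy) : y ∉ seqB b n)),
      seqS_congr b n h]

lemma seqB_mono (b : ℝ) {n m : ℕ} (h : n ≤ m) : seqB b n ⊆ seqB b m :=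
  fun _ ⟨t, h1, h2, h3⟩ => ⟨t, h1, h2.trans h, h3⟩

lemma measurable_cusumLog {Ω : Type*} [MeasurableSpace Ω] {L : ℕ → Ω → ℝ}
    (h : ∀ t, Measurable (L t)) : ∀ t, Measurable (cusumLog L t)
  | 0 => measurable_const
  | t + 1 =>
      ((measurable_cusumLog h t).add (Real.measurable_log.comp (h t))).max measurable_const

lemma measurable_seqC (t : ℕ) : Measurable (seqC t) :=
  measurable_cusumLog (fun i => measurable_pi_apply i) t

lemma measurableSet_seqB (b : ℝ) (n : ℕ) : MeasurableSet (seqB b n) := by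
  have : seqB b n = ⋃ t ∈ Set.Icc 1 n, {x | b ≤ seqC t x} := by
    ext x
    simp only [seqB, Set.mem_setOf_eq, Set.mem_iUnion, Set.mem_Icc, exists_prop]
    tauto
  rw [this]
  exact MeasurableSet.biUnion (Set.to_countable _)
    (fun t _ => measurableSet_le measurable_const (measurable_seqC t))

lemma measurable_seqS (b : ℝ) : ∀ n, Measurable (seqS b n)
  | 0 => measurable_const
  | n + 1 => by
      refine Measurable.ite (measurableSet_seqB b n) (measurable_seqS b n) ?_
      exact ((measurable_seqS b n).add measurable_const).mul
        (ENNReal.measurable_ofReal.comp (measurable_pi_apply n))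

lemma measurable_seqF (b : ℝ) (n : ℕ) : Measurable (seqF b n) := by
  unfold seqF
  exact Measurable.indicator ((measurable_seqS b n).add measurable_const)
    (measurableSet_seqB b n).compl

lemma measurable_extFun (n : ℕ) : Measurable (extFun n) := by
  refine measurable_pi_lambda _ (fun i => ?_)
  by_cases h : i ∈ Finset.range n
  · simpa [extFun, h] using measurable_pi_apply (⟨i, h⟩ : (Finset.range n : Finset ℕ))
  · simp [extFun, h]

lemma ofReal_exp_seqC_le (x : ℕ → ℝ) (hx : ∀ i, 0 < x i) :
    ∀ n, ENNReal.ofReal (Real.exp (seqC n x)) ≤ max (seqR n x) 1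
  | 0 => by simp [seqC, cusumLog, seqR]
  | n + 1 => by
      have hmax : Real.exp (max (seqC n x + Real.log (x n)) 0)
          = max (Real.exp (seqC n x) * x n) 1 := by
        rw [(Real.exp_monotone).map_max, Real.exp_add, Real.exp_log (hx n), Real.exp_zero]
      have hofmono : Monotone ENNReal.ofReal := fun _ _ h => ENNReal.ofReal_le_ofReal h
      have hofmax : ENNReal.ofReal (max (Real.exp (seqC n x) * x n) 1)
          = max (ENNReal.ofReal (Real.exp (seqC n x) * x n)) 1 := by
        rw [hofmono.map_max, ENNReal.ofReal_one]
      rw [seqC_succ, hmax, hofmax]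
      refine max_le ?_ (le_max_right _ _)
      have h1 : ENNReal.ofReal (Real.exp (seqC n x) * x n)
          = ENNReal.ofReal (Real.exp (seqC n x)) * ENNReal.ofReal (x n) :=
        ENNReal.ofReal_mul (Real.exp_nonneg _)
      have h2 : ENNReal.ofReal (Real.exp (seqC n x)) ≤ seqR n x + 1 := by
        refine le_trans (ofReal_exp_seqC_le x hx n) (max_le ?_ ?_)
        · exact self_le_add_right _ _
        · exact le_add_self
      calc ENNReal.ofReal (Real.exp (seqC n x) * x n)
          = ENNReal.ofReal (Real.exp (seqC n x)) * ENNReal.ofReal (x n) := h1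
        _ ≤ (seqR n x + 1) * ENNReal.ofReal (x n) := mul_le_mul_left h2 _
        _ = seqR (n + 1) x := rfl
        _ ≤ max (seqR (n + 1) x) 1 := le_max_left _ _

lemma seqS_eq_seqR (b : ℝ) (x : ℕ → ℝ) : ∀ n, x ∉ seqB b n → seqS b n x = seqR n x
  | 0, _ => rfl
  | n + 1, h => by
      have hn : x ∉ seqB b n := fun hx => h (seqB_mono b n.le_succ hx)
      simp only [seqS, if_neg hn, seqS_eq_seqR b x n hn]
      rfl

lemma ofReal_exp_le_seqS {b : ℝ} (hb : 0 < b) (x : ℕ → ℝ) (hx : ∀ i, 0 < x i) :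
    ∀ n, x ∈ seqB b n → ENNReal.ofReal (Real.exp b) ≤ seqS b n x
  | 0, h => by
      obtain ⟨t, h1, h2, _⟩ := h
      omega
  | n + 1, h => by
      by_cases hn : x ∈ seqB b n
      · have := ofReal_exp_le_seqS hb x hx n hn
        simpa only [seqS, if_pos hn] using this
      · have hc : b ≤ seqC (n + 1) x := by
          obtain ⟨t, ht1, ht2, ht3⟩ := h
          have : t = n + 1 := by
            rcases Nat.lt_or_ge t (n + 1) with h' | h'
            · exact absurd ⟨t, ht1, Nat.lt_succ_iff.mp h', ht3⟩ hn
            · exact le_antisymm ht2 h'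
          rwa [this] at ht3
        have h1 : ENNReal.ofReal (Real.exp b) ≤ max (seqR (n + 1) x) 1 :=
          le_trans (ENNReal.ofReal_le_ofReal (Real.exp_le_exp.2 hc))
            (ofReal_exp_seqC_le x hx (n + 1))
        have hgt1 : (1 : ℝ≥0∞) < ENNReal.ofReal (Real.exp b) := by
          rw [← ENNReal.ofReal_one]
          exact (ENNReal.ofReal_lt_ofReal_iff (Real.exp_pos b)).2 (Real.one_lt_exp_iff.2 hb)
        have h2 : ENNReal.ofReal (Real.exp b) ≤ seqR (n + 1) x := by
          rcases le_total (seqR (n + 1) x) 1 with hle | hle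
          · rw [max_eq_right hle] at h1
            exact absurd (lt_of_lt_of_le hgt1 h1) (lt_irrefl _)
          · rwa [max_eq_left hle] at h1
        have h3 : seqS b (n + 1) x = seqR (n + 1) x := by
          simp only [seqS, if_neg hn, seqS_eq_seqR b x n hn]
          rfl
        rw [h3]
        exact h2

/-- **Run length to false alarm lower bound for CuSum.** If `L 0, L 1, …` are i.i.d.
a.s. strictly positive integrable random variables with mean `1` (with `L t` playing the
role of `L_{t+1}`) and `b > 0`, then `E[T] ≥ e^b`. -/
theorem cusum_run_length_lower_bound
    {Ω : Type*} [MeasurableSpace Ω] (P : Measure Ω) [IsProbabilityMeasure P]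
    (L : ℕ → Ω → ℝ) (hmeas : ∀ t, Measurable (L t))
    (hindep : iIndepFun L P)
    (hident : ∀ t, Measure.map (L t) P = Measure.map (L 0) P)
    (hpos : ∀ t, ∀ᵐ ω ∂P, 0 < L t ω)
    (hint : Integrable (L 0) P) (hmean : ∫ ω, L 0 ω ∂P = 1)
    (b : ℝ) (hb : 0 < b) :
    ENNReal.ofReal (Real.exp b) ≤ ∫⁻ ω, (cusumHit L b ω : ℝ≥0∞) ∂P := by
  classical
  set X : Ω → ℕ → ℝ := fun ω i => L i ω with hXdef
  have hXmeas : Measurable X := measurable_pi_lambda _ hmeas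
  have hbridge : ∀ t ω, cusumLog L t ω = seqC t (X ω) := fun t ω => cusumLog_eq_seqC L ω t
  have hposAll : ∀ᵐ ω ∂P, ∀ i, 0 < L i ω := ae_all_iff.2 hpos
  -- each likelihood ratio has lower integral 1
  have hL1 : ∀ n, ∫⁻ ω, ENNReal.ofReal (L n ω) ∂P = 1 := by
    intro n
    rw [← lintegral_map ENNReal.measurable_ofReal (hmeas n), hident n,
      lintegral_map ENNReal.measurable_ofReal (hmeas 0),
      ← ofReal_integral_eq_lintegral_ofReal hint ((hpos 0).mono fun ω h => h.le), hmean,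
      ENNReal.ofReal_one]
  set B : ℕ → Set Ω := fun n => X ⁻¹' seqB b n with hBdef
  have hBmeas : ∀ n, MeasurableSet (B n) := fun n => hXmeas (measurableSet_seqB b n)
  have hS_meas : ∀ n, Measurable fun ω => seqS b n (X ω) :=
    fun n => (measurable_seqS b n).comp hXmeas
  have hF_meas : ∀ n, Measurable fun ω => seqF b n (X ω) :=
    fun n => (measurable_seqF b n).comp hXmeas
  -- independence of the stopped integrand from the fresh likelihood ratio
  have hiF : ∀ n, IndepFun (fun ω => seqF b n (X ω)) (fun ω => ENNReal.ofReal (L n ω)) P := by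
    intro n
    have hdisj : Disjoint (Finset.range n) ({n} : Finset ℕ) := by
      simp [Finset.disjoint_singleton_right]
    have h1 := hindep.indepFun_finset (Finset.range n) {n} hdisj hmeas
    have hφ : Measurable fun v : {i // i ∈ Finset.range n} → ℝ => seqF b n (extFun n v) :=
      (measurable_seqF b n).comp (measurable_extFun n)
    have hψ : Measurable fun v : ({n} : Finset ℕ) → ℝ =>
        ENNReal.ofReal (v ⟨n, Finset.mem_singleton_self n⟩) :=
      ENNReal.measurable_ofReal.comp (measurable_pi_apply _)
    have h2 := h1.comp hφ hψ
    have e1 : (fun v : {i // i ∈ Finset.range n} → ℝ => seqF b n (extFun n v)) ∘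
        (fun a (i : (Finset.range n : Finset ℕ)) => L i a) = fun ω => seqF b n (X ω) := by
      funext ω
      exact seqF_congr (fun i hi => by
        simp [extFun, Finset.mem_range.2 hi, hXdef])
    have e2 : (fun v : ({n} : Finset ℕ) → ℝ =>
          ENNReal.ofReal (v ⟨n, Finset.mem_singleton_self n⟩)) ∘
        (fun a (i : ({n} : Finset ℕ)) => L i a) = fun ω => ENNReal.ofReal (L n ω) := rfl
    rwa [e1, e2] at h2
  -- one-step recursion for the expected stopped SR statistic
  have hstep : ∀ n, ∫⁻ ω, seqS b (n + 1) (X ω) ∂P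
      = ∫⁻ ω, seqS b n (X ω) ∂P + P (B n)ᶜ := by
    intro n
    have hdec : ∀ ω, seqS b (n + 1) (X ω) =
        (B n).indicator (fun ω => seqS b n (X ω)) ω
          + seqF b n (X ω) * ENNReal.ofReal (L n ω) := by
      intro ω
      by_cases h : X ω ∈ seqB b n
      · have hω : ω ∈ B n := h
        simp only [seqS, if_pos h, Set.indicator_of_mem hω, seqF,
          Set.indicator_of_notMem (by simpa using h : X ω ∉ (seqB b n)ᶜ), zero_mul, add_zero]
      · have hω : ω ∉ B n := h
        simp only [seqS, if_neg h, Set.indicator_of_notMem hω, seqF,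
          Set.indicator_of_mem (by simpa using h : X ω ∈ (seqB b n)ᶜ), zero_add]
        rfl
    have hFg : ∫⁻ ω, seqF b n (X ω) * ENNReal.ofReal (L n ω) ∂P
        = ∫⁻ ω, seqF b n (X ω) ∂P := by
      have := lintegral_mul_eq_lintegral_mul_lintegral_of_indepFun (hF_meas n)
        (ENNReal.measurable_ofReal.comp (hmeas n)) (hiF n)
      simpa [hL1 n] using this
    have hFsplit : ∫⁻ ω, seqF b n (X ω) ∂P
        = ∫⁻ ω, ((B n)ᶜ).indicator (fun ω => seqS b n (X ω)) ω ∂P + P (B n)ᶜ := by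
      have hde : ∀ ω, seqF b n (X ω) =
          ((B n)ᶜ).indicator (fun ω => seqS b n (X ω)) ω +
            ((B n)ᶜ).indicator (fun _ => (1 : ℝ≥0∞)) ω := by
        intro ω
        by_cases h : ω ∈ B n
        · simp only [seqF,
            Set.indicator_of_notMem (show X ω ∉ (seqB b n)ᶜ from fun hc => hc h),
            Set.indicator_of_notMem (by simpa using h : ω ∉ (B n)ᶜ), add_zero]
        · simp only [seqF,
            Set.indicator_of_mem (show X ω ∈ (seqB b n)ᶜ from h),
            Set.indicator_of_mem (by simpa using h : ω ∈ (B n)ᶜ)]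
      rw [lintegral_congr hde, lintegral_add_left ((hS_meas n).indicator (hBmeas n).compl)]
      congr 1
      simpa using lintegral_indicator_const (hBmeas n).compl (1 : ℝ≥0∞)
    have hcomb : ∫⁻ ω, (B n).indicator (fun ω => seqS b n (X ω)) ω ∂P
        + ∫⁻ ω, ((B n)ᶜ).indicator (fun ω => seqS b n (X ω)) ω ∂P
        = ∫⁻ ω, seqS b n (X ω) ∂P := by
      rw [← lintegral_add_left ((hS_meas n).indicator (hBmeas n))]
      congr 1
      funext ω
      by_cases h : ω ∈ B n <;> simp [Set.indicator, h]
    rw [lintegral_congr hdec, lintegral_add_left ((hS_meas n).indicator (hBmeas n)), hFg,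
      hFsplit, ← add_assoc, hcomb]
  have hsum : ∀ n, ∫⁻ ω, seqS b n (X ω) ∂P = ∑ k ∈ Finset.range n, P (B k)ᶜ := by
    intro n
    induction n with
    | zero => simp [seqS]
    | succ n ih => rw [hstep n, ih, Finset.sum_range_succ]
  -- the expected stopped SR statistic dominates `e^b · P(B n)`
  have hlow : ∀ n, ENNReal.ofReal (Real.exp b) * P (B n) ≤ ∫⁻ ω, seqS b n (X ω) ∂P := by
    intro n
    have hae : ∀ᵐ ω ∂P,
        (B n).indicator (fun _ => ENNReal.ofReal (Real.exp b)) ω ≤ seqS b n (X ω) := by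
      filter_upwards [hposAll] with ω hω
      by_cases h : ω ∈ B n
      · rw [Set.indicator_of_mem h]
        exact ofReal_exp_le_seqS hb (X ω) (fun i => hω i) n h
      · simp [Set.indicator_of_notMem h]
    calc ENNReal.ofReal (Real.exp b) * P (B n)
        = ∫⁻ ω, (B n).indicator (fun _ => ENNReal.ofReal (Real.exp b)) ω ∂P :=
          (lintegral_indicator_const (hBmeas n) _).symm
      _ ≤ _ := lintegral_mono_ae hae
  -- the expected stopped SR statistic is dominated by `E[T]`
  have hTbound : ∀ n, ∑ k ∈ Finset.range n, P (B k)ᶜ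
      ≤ ∫⁻ ω, (cusumHit L b ω : ℝ≥0∞) ∂P := by
    intro n
    have hpt : ∀ ω, ∑ k ∈ Finset.range n, ((B k)ᶜ).indicator (fun _ => (1 : ℝ≥0∞)) ω
        ≤ (cusumHit L b ω : ℝ≥0∞) := by
      intro ω
      induction n with
      | zero => simp
      | succ n ih =>
        by_cases h : ω ∈ B n
        · rw [Finset.sum_range_succ, Set.indicator_of_notMem (by simpa using h), add_zero]
          exact ih
        · have hall : ∀ k, k ≤ n → ω ∉ B k :=
            fun k hk hmem => h (Set.preimage_mono (seqB_mono b hk) hmem)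
          have hsum1 : ∑ k ∈ Finset.range (n + 1),
              ((B k)ᶜ).indicator (fun _ => (1 : ℝ≥0∞)) ω = (n + 1 : ℕ) := by
            rw [Finset.sum_congr rfl (fun k hk => Set.indicator_of_mem
              (by simpa using hall k (Nat.lt_succ_iff.1 (Finset.mem_range.1 hk))) _)]
            simp
          rw [hsum1]
          have hT : ((n + 1 : ℕ) : ℕ∞) ≤ cusumHit L b ω := by
            apply le_sInf
            rintro s ⟨t, rfl, ht1, ht2⟩
            have htn : ¬ t ≤ n := fun hle =>
              hall t hle (show X ω ∈ seqB b t from ⟨t, ht1, le_rfl, by rwa [← hbridge]⟩)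
            exact_mod_cast Nat.succ_le_of_lt (Nat.lt_of_not_le htn)
          calc ((n + 1 : ℕ) : ℝ≥0∞) = (((n + 1 : ℕ) : ℕ∞) : ℝ≥0∞) := by norm_cast
            _ ≤ _ := ENat.toENNReal_le.2 hT
    calc ∑ k ∈ Finset.range n, P (B k)ᶜ
        = ∫⁻ ω, ∑ k ∈ Finset.range n, ((B k)ᶜ).indicator (fun _ => (1 : ℝ≥0∞)) ω ∂P := by
          rw [lintegral_finset_sum _
            (fun k _ => measurable_const.indicator (hBmeas k).compl)]
          refine (Finset.sum_congr rfl (fun k _ => ?_)).symm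
          simpa using lintegral_indicator_const (hBmeas k).compl (1 : ℝ≥0∞)
      _ ≤ _ := lintegral_mono hpt
  have hmain : ∀ n, ENNReal.ofReal (Real.exp b) * P (B n)
      ≤ ∫⁻ ω, (cusumHit L b ω : ℝ≥0∞) ∂P :=
    fun n => le_trans (hlow n) (le_trans (le_of_eq (hsum n)) (hTbound n))
  set U : Set Ω := ⋃ n, B n with hUdef
  have hUmeas : MeasurableSet U := MeasurableSet.iUnion hBmeas
  by_cases hcompl : P Uᶜ = 0
  · have hPU : P U = 1 := (prob_compl_eq_zero_iff hUmeas).1 hcompl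
    have hmono : Monotone B := fun n m h => Set.preimage_mono (seqB_mono b h)
    have hiU : P U = ⨆ n, P (B n) := hmono.directed_le.measure_iUnion
    have hrw : ENNReal.ofReal (Real.exp b)
        = ⨆ n, ENNReal.ofReal (Real.exp b) * P (B n) := by
      rw [← ENNReal.mul_iSup, ← hiU, hPU, mul_one]
    rw [hrw]
    exact iSup_le hmain
  · have hTop : ∀ ω ∈ Uᶜ, (cusumHit L b ω : ℝ≥0∞) = ⊤ := by
      intro ω hω
      have hempty : {s : ℕ∞ | ∃ t : ℕ, s = (t : ℕ∞) ∧ 1 ≤ t ∧ b ≤ cusumLog L t ω} = ∅ := by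
        ext s
        simp only [Set.mem_setOf_eq, Set.mem_empty_iff_false, iff_false]
        rintro ⟨t, rfl, ht1, ht2⟩
        exact hω (Set.mem_iUnion.2
          ⟨t, show X ω ∈ seqB b t from ⟨t, ht1, le_rfl, by rwa [← hbridge]⟩⟩)
      rw [cusumHit, hempty, sInf_empty]
      rfl
    have hinf : ∫⁻ ω, (cusumHit L b ω : ℝ≥0∞) ∂P = ⊤ := by
      have hge : ⊤ * P Uᶜ ≤ ∫⁻ ω, (cusumHit L b ω : ℝ≥0∞) ∂P :=
        calc ⊤ * P Uᶜ = ∫⁻ _ in Uᶜ, ⊤ ∂P := (setLIntegral_const _ _).symm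
          _ = ∫⁻ ω in Uᶜ, (cusumHit L b ω : ℝ≥0∞) ∂P :=
            setLIntegral_congr_fun hUmeas.compl (fun ω hω => (hTop ω hω).symm)
          _ ≤ _ := setLIntegral_le_lintegral _ _
      have htop : ⊤ * P Uᶜ = ⊤ := ENNReal.top_mul hcompl
      exact top_le_iff.1 (htop ▸ hge)
    rw [hinf]
    exact le_top

end QCDStmt
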